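/- Let a : Fin n → ℕ+ and b₁ ≤ b₂ be positive integers with b₂ < ∑ i, a i. Let A = ∑ i, a i. Extend to a' : Fin (n + (b₂ - b₁ + 1)) → ℕ+ with a' agreeing with a on the first n indices and a' (n + j) = A + j for j ∈ [0, b₂ - b₁]. Then (∃ S ⊆ Fin n, b₁ ≤ ∑_{i ∈ S} a i ∧ ∑_{i ∈ S} a i ≤ b₂) if and only if (∃ T ⊆ Fin (n + (b₂ - b₁ + 1)), ∑_{i ∈ T} a' i = b₂ + A). -/

import Mathlib

theorem stmt4 (n : ℕ) (a : Fin n → ℕ+) (b₁ b₂ : ℕ) (hb₁ : 0 < b₁) (h12 : b₁ ≤ b₂)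
    (A : ℕ) (hA : A = ∑ i, (a i : ℕ)) (hb₂ : b₂ < A)
    (a' : Fin (n + (b₂ - b₁ + 1)) → ℕ+)
    (ha1 : ∀ i : Fin n, (a' (Fin.castAdd (b₂ - b₁ + 1) i) : ℕ) = (a i : ℕ))
    (ha2 : ∀ j : Fin (b₂ - b₁ + 1), (a' (Fin.natAdd n j) : ℕ) = A + (j : ℕ)) :
    (∃ S : Finset (Fin n), b₁ ≤ ∑ i ∈ S, (a i : ℕ) ∧ ∑ i ∈ S, (a i : ℕ) ≤ b₂) ↔
    (∃ T : Finset (Fin (n + (b₂ - b₁ + 1))), ∑ i ∈ T, (a' i : ℕ) = b₂ + A) := by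
  constructor
  · rintro ⟨S, h1, h2⟩
    set s := ∑ i ∈ S, (a i : ℕ) with hs
    refine ⟨(S.disjSum {(⟨b₂ - s, by omega⟩ : Fin (b₂ - b₁ + 1))}).map
      finSumFinEquiv.toEmbedding, ?_⟩
    rw [Finset.sum_map, Finset.sum_disjSum, Finset.sum_singleton]
    simp only [Equiv.coe_toEmbedding, finSumFinEquiv_apply_left,
      finSumFinEquiv_apply_right, ha1, ha2]
    simp only [← hs]
    omega
  · rintro ⟨T, hT⟩
    set U := T.map finSumFinEquiv.symm.toEmbedding with hU
    have hTU : T = U.map finSumFinEquiv.toEmbedding := by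
      rw [hU, Finset.map_map]
      ext x; simp
    rw [hTU, Finset.sum_map, ← Finset.toLeft_disjSum_toRight (u := U),
      Finset.sum_disjSum] at hT
    set S := U.toLeft
    set J := U.toRight
    simp only [Finset.toLeft_disjSum, Finset.toRight_disjSum, Equiv.coe_toEmbedding,
      finSumFinEquiv_apply_left, finSumFinEquiv_apply_right, ha1, ha2] at hT
    have hsA : ∑ i ∈ S, (a i : ℕ) ≤ A := by
      rw [hA]
      exact Finset.sum_le_sum_of_subset (Finset.subset_univ S)
    have hcard : J.card = 1 := by
      have hJ0 : J.card ≠ 0 := by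
        intro h
        rw [Finset.card_eq_zero.mp h, Finset.sum_empty] at hT
        omega
      have hle : J.card * A ≤ ∑ j ∈ J, (A + (j : ℕ)) := by
        calc J.card * A = ∑ _j ∈ J, A := by rw [Finset.sum_const, smul_eq_mul]
        _ ≤ _ := Finset.sum_le_sum fun j _ => Nat.le_add_right _ _
      by_contra hne
      have h2 : 2 ≤ J.card := by omega
      have : 2 * A ≤ J.card * A := Nat.mul_le_mul_right A h2
      omega
    obtain ⟨j, hj⟩ := Finset.card_eq_one.mp hcard
    rw [hj, Finset.sum_singleton] at hT
    have hjle : (j : ℕ) ≤ b₂ - b₁ := by omega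
    exact ⟨S, by omega, by omega⟩
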